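/- The number of 2-minimal words over an alphabet of size q is at most 2^q · q! - 1. -/

import Mathlib

open List

/-- A word contains `Z₂` if it has an infix `v ++ u ++ v` with `u, v` nonempty. -/
def ContainsZ2 {α : Type*} (w : List α) : Prop :=
  ∃ u v : List α, u ≠ [] ∧ v ≠ [] ∧ (v ++ u ++ v) <:+: w

/-- `w` is 2-minimal: it contains `Z₂` but no infix other than `w` itself
contains `Z₂`. -/
def TwoMinimal {α : Type*} (w : List α) : Prop :=
  ContainsZ2 w ∧ ∀ v : List α, v <:+: w → v ≠ w → ¬ ContainsZ2 v

section Basics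
variable {α : Type*}

lemma pattern_containsZ2 {b : α} {v x : List α} (hv : v ≠ [])
    (h : [b] ++ v ++ [b] <:+: x) : ContainsZ2 x :=
  ⟨v, [b], hv, by simp, h⟩

lemma containsZ2_iff {x : List α} :
    ContainsZ2 x ↔ ∃ (b : α) (v : List α), v ≠ [] ∧ [b] ++ v ++ [b] <:+: x := by
  constructor
  · rintro ⟨u, v, hu, hv, hinf⟩
    obtain ⟨a, v', rfl⟩ := List.exists_cons_of_ne_nil hv
    refine ⟨a, v' ++ u, by simp [hu], ?_⟩
    refine List.IsInfix.trans ?_ hinf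
    apply List.IsPrefix.isInfix
    exact ⟨v', by simp⟩
  · rintro ⟨b, v, hv, h⟩
    exact pattern_containsZ2 hv h

lemma containsZ2_mono {x y : List α} (h : x <:+: y) (hx : ContainsZ2 x) : ContainsZ2 y := by
  obtain ⟨u, v, hu, hv, hinf⟩ := hx
  exact ⟨u, v, hu, hv, hinf.trans h⟩

lemma not_containsZ2_infix {x y : List α} (h : x <:+: y) (hy : ¬ ContainsZ2 y) :
    ¬ ContainsZ2 x := fun hx => hy (containsZ2_mono h hx)

lemma infix_dropLast_or_tail {x w : List α} (h : x <:+: w) (hne : x ≠ w) :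
    x <:+: w.dropLast ∨ x <:+: w.tail := by
  obtain ⟨s, t, ht⟩ := h
  subst ht
  cases t with
  | nil =>
    cases s with
    | nil => simp at hne
    | cons c s' =>
      right
      refine ⟨s', [], ?_⟩
      simp
  | cons c t' =>
    left
    rw [show s ++ x ++ c :: t' = s ++ (x ++ c :: t') by simp,
      List.dropLast_append_of_ne_nil (show x ++ c :: t' ≠ [] by simp),
      List.dropLast_append_of_ne_nil (show c :: t' ≠ [] by simp)]
    exact ⟨s, (c :: t').dropLast, by simp⟩

lemma first_split {b : α} [DecidableEq α] {x : List α} :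
    b ∈ x → ∃ s t, x = s ++ b :: t ∧ b ∉ s := by
  induction x with
  | nil => simp
  | cons c x' ih =>
    intro h
    by_cases hc : c = b
    · exact ⟨[], x', by simp [hc], by simp⟩
    · have hb : b ∈ x' := by
        rcases List.mem_cons.mp h with h | h
        · exact absurd h.symm hc
        · exact h
      obtain ⟨s, t, rfl, hs⟩ := ih hb
      exact ⟨c :: s, t, by simp, by simp [hs, Ne.symm hc]⟩

lemma np_head {b : α} [DecidableEq α] {t : List α} (h : ¬ ContainsZ2 (b :: t)) (hb : b ∈ t) :
    ∃ t', t = b :: t' ∧ b ∉ t' := by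
  obtain ⟨s, t₂, rfl, hs⟩ := first_split hb
  cases s with
  | cons c s' =>
    exfalso
    apply h
    apply pattern_containsZ2 (b := b) (v := c :: s') (by simp)
    exact ⟨[], t₂, by simp⟩
  | nil =>
    refine ⟨t₂, by simp, fun hbt => ?_⟩
    obtain ⟨s₂, t₃, rfl, _⟩ := first_split hbt
    apply h
    apply pattern_containsZ2 (b := b) (v := b :: s₂) (by simp)
    exact ⟨[], t₃, by simp⟩

lemma np_tail {b : α} {t : List α} (h : ¬ ContainsZ2 (b :: t)) : ¬ ContainsZ2 t :=
  not_containsZ2_infix ((List.tail_suffix (b :: t)).isInfix) h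

lemma np_count_le [DecidableEq α] {x : List α} (h : ¬ ContainsZ2 x) (b : α) :
    x.count b ≤ 2 := by
  by_contra hc
  push_neg at hc
  have h1 : b ∈ x := by
    rw [← List.count_pos_iff]
    omega
  obtain ⟨s, t, rfl, hs⟩ := first_split h1
  have e1 : (s ++ b :: t).count b = t.count b + 1 := by
    simp [List.count_append, List.count_eq_zero_of_not_mem hs]
  have h2 : b ∈ t := by
    rw [← List.count_pos_iff]
    omega
  obtain ⟨s', t', rfl, hs'⟩ := first_split h2
  have e2 : (s' ++ b :: t').count b = t'.count b + 1 := by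
    simp [List.count_append, List.count_eq_zero_of_not_mem hs']
  have h3 : b ∈ t' := by
    rw [← List.count_pos_iff]
    omega
  obtain ⟨s'', t'', rfl, _⟩ := first_split h3
  apply h
  apply pattern_containsZ2 (b := b) (v := s' ++ b :: s'') (by simp)
  exact ⟨s, t'', by simp⟩

end Basics

section Ext
variable {α : Type*} [DecidableEq α]

lemma np_run {x : List α} (h : ¬ ContainsZ2 x) (hx : x ≠ []) :
    ∃ (b : α) (x' : List α), b ∉ x' ∧ (x = b :: x' ∨ x = b :: b :: x') := by
  obtain ⟨b, t, rfl⟩ := List.exists_cons_of_ne_nil hx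
  by_cases hb : b ∈ t
  · obtain ⟨t', rfl, hb'⟩ := np_head h hb
    exact ⟨b, t', hb', Or.inr rfl⟩
  · exact ⟨b, t, hb, Or.inl rfl⟩

lemma np_ext : ∀ (n : ℕ) (x y : List α), x.length ≤ n →
    ¬ ContainsZ2 x → ¬ ContainsZ2 y → x.dedup = y.dedup →
    (∀ b, x.count b = y.count b) → x = y := by
  intro n
  induction n with
  | zero =>
    intro x y hlen _ _ hd _
    have hx : x = [] := List.length_eq_zero_iff.mp (Nat.le_zero.mp hlen)
    subst hx
    have : y.dedup = [] := by rw [← hd]; simp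
    rw [(List.dedup_eq_nil y).mp this]
  | succ n ih =>
    intro x y hlen hx hy hd hc
    cases' Nat.eq_or_lt_of_le (Nat.zero_le x.length) with h0 h0
    · -- x = []
      have hx0 : x = [] := List.length_eq_zero_iff.mp h0.symm
      subst hx0
      have : y.dedup = [] := by rw [← hd]; simp
      rw [(List.dedup_eq_nil y).mp this]
    · have hxne : x ≠ [] := by
        intro hh; subst hh; simp at h0
      obtain ⟨b, x', hbx', hxe⟩ := np_run hx hxne
      have hyne : y ≠ [] := by
        intro hh
        subst hh
        have := hc b
        simp at this
        rcases hxe with rfl | rfl <;> simp [List.count_cons_self] at this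
      obtain ⟨c, y', hcy', hye⟩ := np_run hy hyne
      -- dedup heads
      have hdx : x.dedup = b :: x'.dedup := by
        rcases hxe with rfl | rfl
        · exact List.dedup_cons_of_notMem hbx'
        · rw [List.dedup_cons_of_mem (show b ∈ b :: x' from List.mem_cons_self),
            List.dedup_cons_of_notMem hbx']
      have hdy : y.dedup = c :: y'.dedup := by
        rcases hye with rfl | rfl
        · exact List.dedup_cons_of_notMem hcy'
        · rw [List.dedup_cons_of_mem (show c ∈ c :: y' from List.mem_cons_self),
            List.dedup_cons_of_notMem hcy']
      rw [hdx, hdy] at hd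
      obtain ⟨hbc, hdd⟩ : b = c ∧ x'.dedup = y'.dedup := by
        constructor
        · exact (List.cons.injEq _ _ _ _ ▸ hd).1
        · exact (List.cons.injEq _ _ _ _ ▸ hd).2
      subst hbc
      -- common tail argument
      have tails : ∀ b' : α, b' ≠ b → x'.count b' = y'.count b' := by
        intro b' hb'
        have := hc b'
        rcases hxe with rfl | rfl <;> rcases hye with rfl | rfl <;>
          simpa [List.count_cons, hb', Ne.symm hb'] using this
      have cnt := hc b
      rcases hxe with rfl | rfl <;> rcases hye with rfl | rfl
      · have : x' = y' := by
          apply ih x' y' (by simp at hlen; omega) (np_tail hx) (np_tail hy) hdd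
          intro d
          by_cases hd' : d = b
          · subst hd'
            rw [List.count_eq_zero_of_not_mem hbx', List.count_eq_zero_of_not_mem hcy']
          · exact tails d hd'
        rw [this]
      · exfalso
        rw [List.count_cons_self, List.count_cons_self, List.count_cons_self,
          List.count_eq_zero_of_not_mem hbx', List.count_eq_zero_of_not_mem hcy'] at cnt
        omega
      · exfalso
        rw [List.count_cons_self, List.count_cons_self, List.count_cons_self,
          List.count_eq_zero_of_not_mem hbx', List.count_eq_zero_of_not_mem hcy'] at cnt
        omega
      · have : x' = y' := by
          apply ih x' y' (by simp at hlen; omega) (np_tail (np_tail hx)) (np_tail (np_tail hy)) hdd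
          intro d
          by_cases hd' : d = b
          · subst hd'
            rw [List.count_eq_zero_of_not_mem hbx', List.count_eq_zero_of_not_mem hcy']
          · exact tails d hd'
        rw [this]

end Ext

section Struct
variable {α : Type*} [DecidableEq α] [Inhabited α]

lemma twoMinimal_struct {w : List α} (h : TwoMinimal w) :
    ∃ (a : α) (u : List α), u ≠ [] ∧ w.dropLast = a :: u ∧
      ¬ ContainsZ2 w.dropLast ∧ w = w.dropLast ++ [a] ∧
      w.dropLast.dedup.headI = a ∧
      ((w.dropLast.dedup.length = 1 ∧ w.dropLast = [a, a]) ∨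
       (2 ≤ w.dropLast.dedup.length ∧ w.dropLast.count a = 1)) := by
  obtain ⟨hz, hmin⟩ := h
  rw [containsZ2_iff] at hz
  obtain ⟨a, u, hu, hinf⟩ := hz
  have hw : [a] ++ u ++ [a] = w := by
    by_contra hne
    exact hmin _ hinf hne (pattern_containsZ2 hu (List.infix_refl _))
  have hx : w.dropLast = a :: u := by
    rw [← hw, show [a] ++ u ++ [a] = (a :: u) ++ [a] by simp, List.dropLast_concat]
  have hlw : w.length = u.length + 2 := by rw [← hw]; simp
  have h1 : ¬ ContainsZ2 (a :: u) := by
    apply hmin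
    · exact ⟨[], [a], by rw [← hw]; simp⟩
    · intro hh
      have := congrArg List.length hh
      simp [hlw] at this
  have h2 : ¬ ContainsZ2 (u ++ [a]) := by
    apply hmin
    · exact ⟨[a], [], by rw [← hw]; simp⟩
    · intro hh
      have := congrArg List.length hh
      simp [hlw] at this
  have hwx : w = w.dropLast ++ [a] := by rw [hx, ← hw]; simp
  by_cases ha : a ∈ u
  · obtain ⟨u', rfl, ha'⟩ := np_head h1 ha
    have h2' : ¬ ContainsZ2 (a :: (u' ++ [a])) := by
      simpa using h2
    have hau' : a ∈ u' ++ [a] := by simp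
    obtain ⟨v', heq, hav'⟩ := np_head h2' hau'
    cases u' with
    | cons c u'' =>
      exfalso
      have : c = a := by
        have := congrArg (fun l => l.headI) heq
        simpa using this
      subst this
      exact ha' (List.mem_cons_self)
    | nil =>
      have hded : (a :: [a]).dedup = [a] := by
        rw [List.dedup_cons_of_mem (show a ∈ [a] from List.mem_cons_self)]
        simp [List.dedup_cons_of_notMem]
      refine ⟨a, [a], by simp, hx, by rw [hx]; exact h1, hwx, ?_, Or.inl ⟨?_, ?_⟩⟩
      · rw [hx, hded]; rfl
      · rw [hx, hded]; rfl
      · exact hx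
  · have hded : (a :: u).dedup = a :: u.dedup := List.dedup_cons_of_notMem ha
    have hdu : u.dedup ≠ [] := by
      rw [Ne, List.dedup_eq_nil]
      exact hu
    refine ⟨a, u, hu, hx, by rw [hx]; exact h1, hwx, ?_, Or.inr ⟨?_, ?_⟩⟩
    · rw [hx, hded]; rfl
    · rw [hx, hded]
      simp only [List.length_cons]
      have := List.length_pos_iff.mpr hdu
      omega
    · rw [hx]
      simp [List.count_cons, List.count_eq_zero_of_not_mem ha]

end Struct

section Phi
variable {q : ℕ} [NeZero q]

noncomputable def phi (w : List (Fin q)) : List (Fin q) × Finset (Fin q) :=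
  ((w.dropLast.dedup) ++ (Finset.univ \ w.dropLast.dedup.toFinset).toList,
    ((w.dropLast.dedup.toFinset.erase w.dropLast.dedup.headI).filter
        fun b => 2 ≤ w.dropLast.count b) ∪
      (Finset.univ \ w.dropLast.dedup.toFinset).toList.tail.toFinset ∪
      (if w.dropLast.dedup.toFinset = Finset.univ then {w.dropLast.dedup.headI} else ∅))

lemma phi_spec {w : List (Fin q)} (h : TwoMinimal w) :
    (phi w).1 = w.dropLast.dedup ++ (Finset.univ \ w.dropLast.dedup.toFinset).toList ∧
    w = w.dropLast ++ [w.dropLast.dedup.headI] ∧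
    ¬ ContainsZ2 w.dropLast ∧
    w.dropLast.dedup ≠ [] ∧
    w.dropLast.dedup.headI ∈ w.dropLast.dedup.toFinset ∧
    (w.dropLast.dedup.headI ∈ (phi w).2 ↔ w.dropLast.dedup.toFinset = Finset.univ) ∧
    (w.dropLast.dedup.toFinset ≠ Finset.univ →
      (Finset.univ \ w.dropLast.dedup.toFinset).toList ≠ [] ∧
      (Finset.univ \ w.dropLast.dedup.toFinset).toList.headI ∉ (phi w).2 ∧
      (Finset.univ \ w.dropLast.dedup.toFinset).toList.headI ∉ w.dropLast.dedup.toFinset) ∧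
    (∀ b ∈ w.dropLast.dedup.toFinset.erase w.dropLast.dedup.headI,
      (b ∈ (phi w).2 ↔ w.dropLast.count b = 2) ∧
      (b ∉ (phi w).2 → w.dropLast.count b = 1)) ∧
    ((w.dropLast.dedup.length = 1 ∧
        w.dropLast = [w.dropLast.dedup.headI, w.dropLast.dedup.headI]) ∨
      (2 ≤ w.dropLast.dedup.length ∧ w.dropLast.count w.dropLast.dedup.headI = 1)) ∧
    (Finset.univ \ w.dropLast.dedup.toFinset).toList.tail.toFinset ⊆ (phi w).2 ∧
    (phi w).1.Nodup ∧
    (phi w).1.length = q ∧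
    w.dropLast.dedup.length = w.dropLast.dedup.toFinset.card := by
  obtain ⟨a0, u, hu, hx, hnp, hwx, hhead, hcases⟩ := twoMinimal_struct h
  set x := w.dropLast with hxdef
  set L := x.dedup with hLdef
  set A := L.toFinset with hAdef
  set a := L.headI with hadef
  set r := (Finset.univ \ A).toList with hrdef
  have haa0 : a = a0 := hhead
  have hLne : L ≠ [] := by
    rw [hLdef, Ne, List.dedup_eq_nil, hx]
    simp
  have haA : a ∈ A := by
    rw [hAdef, List.mem_toFinset, hLdef, List.mem_dedup, hx, haa0]
    exact List.mem_cons_self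
  have hrmem : ∀ b, b ∈ r ↔ b ∉ A := by
    intro b
    rw [hrdef, Finset.mem_toList, Finset.mem_sdiff]
    simp
  have hI : (phi w).2 = ((A.erase a).filter fun b => 2 ≤ x.count b) ∪
      r.tail.toFinset ∪ (if A = Finset.univ then {a} else ∅) := rfl
  have hxmem : ∀ b, b ∈ A ↔ b ∈ x := by
    intro b
    rw [hAdef, List.mem_toFinset, hLdef, List.mem_dedup]
  -- (2)
  have spec2 : (a ∈ (phi w).2 ↔ A = Finset.univ) := by
    rw [hI]
    constructor
    · intro hmem
      rcases Finset.mem_union.mp hmem with hmem | hmem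
      · rcases Finset.mem_union.mp hmem with hmem | hmem
        · exact absurd (Finset.mem_erase.mp (Finset.mem_filter.mp hmem).1).1 (by simp)
        · exact absurd ((hrmem a).mp (by
            exact List.mem_toFinset.mp hmem |> (List.tail_subset r))) (by simp [haA])
      · by_cases hAu : A = Finset.univ
        · exact hAu
        · simp [hAu] at hmem
    · intro hAu
      apply Finset.mem_union_right
      simp [hAu]
  -- (3)
  have spec3 : A ≠ Finset.univ → r ≠ [] ∧ r.headI ∉ (phi w).2 ∧ r.headI ∉ A := by
    intro hAu
    have hrne : r ≠ [] := by
      intro hh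
      rw [hrdef, Finset.toList_eq_nil, Finset.sdiff_eq_empty_iff_subset,
        Finset.univ_subset_iff] at hh
      exact hAu hh
    obtain ⟨rh, rtl, hr⟩ := List.exists_cons_of_ne_nil hrne
    have hrhr : rh ∈ r := by rw [hr]; exact List.mem_cons_self
    have hrhA : rh ∉ A := (hrmem rh).mp hrhr
    have hrhead : r.headI = rh := by rw [hr]; rfl
    have hrhI : r.headI ∉ (phi w).2 := by
      intro hmem
      rw [hI, hrhead] at hmem
      rcases Finset.mem_union.mp hmem with hmem | hmem
      · rcases Finset.mem_union.mp hmem with hmem | hmem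
        · exact hrhA (Finset.mem_erase.mp (Finset.mem_filter.mp hmem).1).2
        · have h1 : rh ∈ rtl := by
            have h2 := List.mem_toFinset.mp hmem
            rw [hr] at h2
            simpa using h2
          have hnd : r.Nodup := Finset.nodup_toList _
          rw [hr, List.nodup_cons] at hnd
          exact hnd.1 h1
      · simp [hAu] at hmem
    have hrhA' : r.headI ∉ A := by rw [hrhead]; exact hrhA
    exact ⟨hrne, hrhI, hrhA'⟩
  -- (4)
  have spec4 : ∀ b ∈ A.erase a,
      (b ∈ (phi w).2 ↔ x.count b = 2) ∧ (b ∉ (phi w).2 → x.count b = 1) := by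
    intro b hb
    have hbA : b ∈ A := (Finset.mem_erase.mp hb).2
    have hbx : b ∈ x := (hxmem b).mp hbA
    have hc1 : 1 ≤ x.count b := List.count_pos_iff.mpr hbx
    have hc2 : x.count b ≤ 2 := np_count_le hnp b
    have hiff : b ∈ (phi w).2 ↔ x.count b = 2 := by
      rw [hI]
      constructor
      · intro hmem
        rcases Finset.mem_union.mp hmem with hmem | hmem
        · rcases Finset.mem_union.mp hmem with hmem | hmem
          · have := (Finset.mem_filter.mp hmem).2
            omega
          · exact absurd hbA (by
              exact (hrmem b).mp ((List.tail_subset r) (List.mem_toFinset.mp hmem)))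
        · by_cases hAu : A = Finset.univ
          · simp [hAu] at hmem
            exact absurd hb (by simp [hmem])
          · simp [hAu] at hmem
      · intro hc
        apply Finset.mem_union_left
        apply Finset.mem_union_left
        exact Finset.mem_filter.mpr ⟨hb, by omega⟩
    exact ⟨hiff, fun hni => by
      rw [hiff] at hni
      omega⟩
  -- tail subset
  have spec10 : r.tail.toFinset ⊆ (phi w).2 := by
    intro b hb
    rw [hI]
    exact Finset.mem_union_left _ (Finset.mem_union_right _ hb)
  -- nodup and length
  have hnodup : (L ++ r).Nodup := by
    refine List.Nodup.append (List.nodup_dedup x) (Finset.nodup_toList _) ?_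
    intro b hbL hbr
    exact (hrmem b).mp hbr (by rw [hAdef]; exact List.mem_toFinset.mpr hbL)
  have hcardA : L.length = A.card := (List.toFinset_card_of_nodup (List.nodup_dedup x)).symm
  have hAle : A.card ≤ q := by
    have := Finset.card_le_univ A
    simpa using this
  have hlen : (L ++ r).length = q := by
    rw [List.length_append, hrdef, Finset.length_toList, Finset.card_sdiff_of_subset (Finset.subset_univ A)]
    simp only [Finset.card_univ, Fintype.card_fin]
    omega
  refine ⟨rfl, by rw [haa0]; exact hwx, hnp, hLne, haA, spec2, spec3, spec4, ?_,
    spec10, hnodup, hlen, hcardA⟩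
  rw [haa0]
  exact hcases

end Phi

section Inj
variable {q : ℕ} [NeZero q]

lemma headI_append_of_ne_nil {L r : List (Fin q)} (h : L ≠ []) :
    (L ++ r).headI = L.headI := by
  obtain ⟨c, tl, rfl⟩ := List.exists_cons_of_ne_nil h
  rfl

lemma phi_lt_aux {w w' : List (Fin q)} (h : TwoMinimal w) (h' : TwoMinimal w')
    (heq : phi w = phi w')
    (hlt : w.dropLast.dedup.length < w'.dropLast.dedup.length) : False := by
  obtain ⟨s1, s2w, s3np, s4ne, s5aA, s6, s7, s8, s9, s10, s11, s12, s13⟩ := phi_spec h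
  obtain ⟨t1, t2w, t3np, t4ne, t5aA, t6, t7, t8, t9, t10, t11, t12, t13⟩ := phi_spec h'
  set x := w.dropLast
  set L := x.dedup with hL
  set A := L.toFinset
  set a := L.headI
  set r := (Finset.univ \ A).toList with hr0
  set x' := w'.dropLast
  set L' := x'.dedup with hL'
  set A' := L'.toFinset
  set a' := L'.headI
  set r' := (Finset.univ \ A').toList with hr0'
  have hσ : L ++ r = L' ++ r' := by rw [← s1, ← t1, heq]
  have hIeq : (phi w).2 = (phi w').2 := by rw [heq]
  have haa' : a = a' := by
    show L.headI = L'.headI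
    rw [← headI_append_of_ne_nil (r := r) s4ne, hσ, headI_append_of_ne_nil t4ne]
  -- q bounds
  have hm'q : L'.length ≤ q := by
    have h1 := t12
    rw [t1, List.length_append] at h1
    omega
  by_cases hA : A = Finset.univ
  · have hmq : L.length = q := by
      rw [s13, hA]
      simp [Finset.card_univ]
    omega
  · have hA' : A' ≠ Finset.univ := by
      intro hh
      apply hA
      apply s6.mp
      rw [haa', hIeq]
      exact t6.mpr hh
    obtain ⟨hrne, -, -⟩ := s7 hA
    obtain ⟨hrne', hcI', hcA'⟩ := t7 hA'
    obtain ⟨rh, rtl, hr⟩ := List.exists_cons_of_ne_nil hrne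
    -- L is a prefix of L'
    have hLtake : L = L'.take L.length := by
      have h1 : (L ++ r).take L.length = L := List.take_left
      rw [hσ, List.take_append,
        Nat.sub_eq_zero_of_le (le_of_lt hlt), List.take_zero, List.append_nil] at h1
      exact h1.symm
    have hAA' : ∀ b, b ∈ A → b ∈ A' := by
      intro b hb
      have hbL : b ∈ L := List.mem_toFinset.mp hb
      rw [hLtake] at hbL
      exact List.mem_toFinset.mpr (List.take_subset L.length L' hbL)
    -- rh ∈ A'
    have hL'eq : L' = L ++ r.take (L'.length - L.length) := by
      have h1 : (L' ++ r').take L'.length = L' := List.take_left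
      rw [← hσ, List.take_append,
        List.take_of_length_le (le_of_lt hlt)] at h1
      exact h1.symm
    have hrhA' : rh ∈ A' := by
      rw [List.mem_toFinset, hL'eq]
      apply List.mem_append_right
      obtain ⟨k, hk⟩ : ∃ k, L'.length - L.length = k + 1 :=
        ⟨L'.length - L.length - 1, by omega⟩
      rw [hk, hr, List.take_succ_cons]
      exact List.mem_cons_self
    -- c := r'.headI
    have hcA : r'.headI ∉ A := fun hc => hcA' (hAA' _ hc)
    have hcr : r'.headI ∈ r := by
      rw [hr0, Finset.mem_toList, Finset.mem_sdiff]
      exact ⟨Finset.mem_univ _, hcA⟩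
    have hcrh : r'.headI ≠ rh := by
      intro hh
      rw [hh] at hcA'
      exact hcA' hrhA'
    have hcrtl : r'.headI ∈ r.tail.toFinset := by
      rw [hr]
      simp only [List.tail_cons, List.mem_toFinset]
      rw [hr] at hcr
      rcases List.mem_cons.mp hcr with hh | hh
      · exact absurd hh hcrh
      · exact hh
    exact hcI' (hIeq ▸ s10 hcrtl)

lemma phi_inj {w w' : List (Fin q)} (h : TwoMinimal w) (h' : TwoMinimal w')
    (heq : phi w = phi w') : w = w' := by
  obtain ⟨s1, s2w, s3np, s4ne, s5aA, s6, s7, s8, s9, s10, s11, s12, s13⟩ := phi_spec h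
  obtain ⟨t1, t2w, t3np, t4ne, t5aA, t6, t7, t8, t9, t10, t11, t12, t13⟩ := phi_spec h'
  set x := w.dropLast
  set L := x.dedup with hL
  set A := L.toFinset
  set a := L.headI
  set r := (Finset.univ \ A).toList with hr0
  set x' := w'.dropLast
  set L' := x'.dedup with hL'
  set A' := L'.toFinset
  set a' := L'.headI
  set r' := (Finset.univ \ A').toList with hr0'
  have hσ : L ++ r = L' ++ r' := by rw [← s1, ← t1, heq]
  have hIeq : (phi w).2 = (phi w').2 := by rw [heq]
  have hmm : L.length = L'.length := by
    rcases Nat.lt_trichotomy L.length L'.length with hlt | heq' | hlt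
    · exact absurd (phi_lt_aux h h' heq hlt) (by simp)
    · exact heq'
    · exact absurd (phi_lt_aux h' h heq.symm hlt) (by simp)
  obtain ⟨hLL, hrr⟩ := List.append_inj hσ hmm
  have haa' : a = a' := by show L.headI = L'.headI; rw [hLL]
  rcases s9 with ⟨hm1, hxaa⟩ | ⟨hm2, hca⟩
  · rcases t9 with ⟨hm1', hxaa'⟩ | ⟨hm2', hca'⟩
    · rw [s2w, t2w, hxaa, hxaa', haa']
    · omega
  · rcases t9 with ⟨hm1', hxaa'⟩ | ⟨hm2', hca'⟩
    · omega
    · have hcnt : ∀ b, x.count b = x'.count b := by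
        intro b
        by_cases hbA : b ∈ A
        · by_cases hba : b = a
          · rw [hba, hca, haa', hca']
          · have hbmem : b ∈ A.erase a := Finset.mem_erase.mpr ⟨hba, hbA⟩
            have hAA : A = A' := by
              rw [show A = L.toFinset from rfl, show A' = L'.toFinset from rfl, hLL]
            have hbmem' : b ∈ A'.erase a' := by
              rw [← hAA, ← haa']
              exact hbmem
            by_cases hbI : b ∈ (phi w).2
            · rw [(s8 b hbmem).1.mp hbI, ((t8 b hbmem').1.mp (hIeq ▸ hbI))]
            · rw [(s8 b hbmem).2 hbI, (t8 b hbmem').2 (hIeq ▸ hbI)]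
        · have hbx : b ∉ x := by
            intro hh
            exact hbA (List.mem_toFinset.mpr (List.mem_dedup.mpr hh))
          have hbx' : b ∉ x' := by
            intro hh
            apply hbA
            have h1 : b ∈ L' := List.mem_dedup.mpr hh
            rw [← hLL] at h1
            exact List.mem_toFinset.mpr h1
          rw [List.count_eq_zero_of_not_mem hbx, List.count_eq_zero_of_not_mem hbx']
      have hxx : x = x' := np_ext x.length x x' le_rfl s3np t3np hLL hcnt
      rw [s2w, t2w, hxx, haa']

end Inj

/-- The number of 2-minimal words over an alphabet of size `q` is at most
`2^q · q! - 1`. -/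
theorem twoMinimal_count (q : ℕ) :
    {w : List (Fin q) | TwoMinimal w}.ncard ≤ 2 ^ q * q.factorial - 1 := by
  rcases Nat.eq_zero_or_pos q with rfl | hq
  · have hempty : {w : List (Fin 0) | TwoMinimal w} = ∅ := by
      ext w
      simp only [Set.mem_setOf_eq, Set.mem_empty_iff_false, iff_false]
      intro hw
      obtain ⟨⟨u, v, hu, hv, hinf⟩, -⟩ := hw
      obtain ⟨c, v', rfl⟩ := List.exists_cons_of_ne_nil hv
      exact c.elim0
    rw [hempty]
    simp
  · haveI : NeZero q := ⟨hq.ne'⟩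
    set S := {w : List (Fin q) | TwoMinimal w} with hS
    set F1 : Finset (List (Fin q)) := (List.finRange q).permutations.toFinset with hF1
    set bad : List (Fin q) × Finset (Fin q) :=
      (List.finRange q, Finset.univ.erase ((List.finRange q).headI)) with hbaddef
    set F : Finset (List (Fin q) × Finset (Fin q)) :=
      (F1 ×ˢ (Finset.univ : Finset (Finset (Fin q)))).erase bad with hF
    have hbadmem : bad ∈ F1 ×ˢ (Finset.univ : Finset (Finset (Fin q))) := by
      refine Finset.mem_product.mpr ⟨?_, Finset.mem_univ _⟩
      exact List.mem_toFinset.mpr (List.mem_permutations.mpr (List.Perm.refl _))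
    have hmemF : ∀ w ∈ S, phi w ∈ F := by
      intro w hw
      obtain ⟨s1, s2w, s3np, s4ne, s5aA, s6, s7, s8, s9, s10, s11, s12, s13⟩ := phi_spec hw
      refine Finset.mem_erase.mpr ⟨?_, ?_⟩
      · intro hbad
        have h1 : (phi w).1 = List.finRange q := by rw [hbad]
        have h2 : (phi w).2 = Finset.univ.erase ((List.finRange q).headI) := by rw [hbad]
        have hahead : (List.finRange q).headI = w.dropLast.dedup.headI := by
          rw [← h1, s1, headI_append_of_ne_nil s4ne]
        rw [hahead] at h2
        have haI : w.dropLast.dedup.headI ∉ (phi w).2 := by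
          rw [h2]
          simp
        have hAu : w.dropLast.dedup.toFinset ≠ Finset.univ := fun hh => haI (s6.mpr hh)
        obtain ⟨hrne, hcI, hcA⟩ := s7 hAu
        have hca : (Finset.univ \ w.dropLast.dedup.toFinset).toList.headI ≠
            w.dropLast.dedup.headI := by
          intro hh
          rw [hh] at hcA
          exact hcA s5aA
        apply hcI
        rw [h2]
        exact Finset.mem_erase.mpr ⟨hca, Finset.mem_univ _⟩
      · refine Finset.mem_product.mpr ⟨?_, Finset.mem_univ _⟩
        refine List.mem_toFinset.mpr (List.mem_permutations.mpr ?_)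
        have hsub : (phi w).1 ⊆ List.finRange q := fun b _ => List.mem_finRange b
        refine (s11.subperm hsub).perm_of_length_le ?_
        rw [s12, List.length_finRange]
    have hinj : Set.InjOn phi S := fun w hw w' hw' hww' => phi_inj hw hw' hww'
    have himg : phi '' S ⊆ (↑F : Set (List (Fin q) × Finset (Fin q))) := by
      rintro p ⟨w, hw, rfl⟩
      exact hmemF w hw
    calc S.ncard = (phi '' S).ncard := (Set.ncard_image_of_injOn hinj).symm
      _ ≤ (↑F : Set (List (Fin q) × Finset (Fin q))).ncard :=
          Set.ncard_le_ncard himg (F.finite_toSet)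
      _ = F.card := Set.ncard_coe_finset F
      _ = (F1 ×ˢ (Finset.univ : Finset (Finset (Fin q)))).card - 1 :=
          Finset.card_erase_of_mem hbadmem
      _ ≤ 2 ^ q * q.factorial - 1 := by
          rw [Finset.card_product, hF1,
            List.toFinset_card_of_nodup (List.nodup_permutations _ (List.nodup_finRange q)),
            List.length_permutations, List.length_finRange, Finset.card_univ,
            Fintype.card_finset, Fintype.card_fin, Nat.mul_comm]
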